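/- arXiv:1804.10203 — 3 statements merged into one kernel-verified Lean document; each statement's English description precedes it below -/
import Mathlib

section
/- If p is a complex polynomial of degree n having no zero in the open unit disk {z : |z| < 1}, then max_{|z|=1} |p'(z)| ≤ (n/2) · max_{|z|=1} |p(z)|. -/
open Polynomial Metric

noncomputable def polyMaxOn (p : Polynomial ℂ) (r : ℝ) : ℝ :=
  sSup ((fun z => ‖p.eval z‖) '' sphere (0 : ℂ) r)


lemma lemA {z r : ℂ} (hz : ‖z‖ = 1) (hr : 1 ≤ ‖r‖) (hne : z ≠ r) :
    (z / (z - r)).re ≤ 1 / 2 := by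
  have hd : z - r ≠ 0 := sub_ne_zero.mpr hne
  have hpos : 0 < Complex.normSq (z - r) := Complex.normSq_pos.mpr hd
  have hz2 : z.re ^ 2 + z.im ^ 2 = 1 := by
    have := Complex.sq_norm z
    rw [hz] at this
    simp [Complex.normSq_apply] at this
    nlinarith [this]
  have hr2 : 1 ≤ r.re ^ 2 + r.im ^ 2 := by
    have h1 : 1 ≤ ‖r‖ ^ 2 := by nlinarith [hr, norm_nonneg r]
    rw [Complex.sq_norm, Complex.normSq_apply] at h1
    nlinarith [h1]
  rw [Complex.div_re, ← add_div, div_le_iff₀ hpos]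
  simp only [Complex.normSq_apply, Complex.sub_re, Complex.sub_im]
  nlinarith [hz2, hr2]

lemma lemB (n : ℕ) : ∀ P : ℂ[X], P ≠ 0 → P.natDegree = n →
    (∀ w : ℂ, P.eval w = 0 → 1 ≤ ‖w‖) →
    ∀ z : ℂ, ‖z‖ = 1 → P.eval z ≠ 0 →
    (z * (derivative P).eval z / P.eval z).re ≤ n / 2 := by
  induction n with
  | zero =>
    intro P hP h0 _ z _ _
    obtain ⟨a, rfl⟩ := Polynomial.natDegree_eq_zero.mp h0
    simp
  | succ m ih =>
    intro P hP hdeg hroots z hz hPz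
    have hdeg' : P.degree ≠ 0 := by
      rw [Polynomial.degree_eq_natDegree hP, hdeg]; exact_mod_cast (by omega : (m+1 : ℕ) ≠ 0)
    obtain ⟨r, hr⟩ := IsAlgClosed.exists_root P hdeg'
    obtain ⟨Q, hQ⟩ := (Polynomial.dvd_iff_isRoot.mpr hr)
    have hQ0 : Q ≠ 0 := by rintro rfl; simp at hQ; exact hP hQ
    have hQdeg : Q.natDegree = m := by
      have := Polynomial.natDegree_mul (Polynomial.X_sub_C_ne_zero r) hQ0
      rw [← hQ, hdeg, Polynomial.natDegree_X_sub_C] at this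
      omega
    have hQroots : ∀ w : ℂ, Q.eval w = 0 → 1 ≤ ‖w‖ := by
      intro w hw
      exact hroots w (by rw [hQ]; simp [hw])
    have hQz : Q.eval z ≠ 0 := by
      intro h; apply hPz; rw [hQ]; simp [h]
    have hzr : z ≠ r := by
      intro h; apply hPz; rw [hQ, h]; simp
    have hder : (derivative P).eval z = Q.eval z + (z - r) * (derivative Q).eval z := by
      rw [hQ, Polynomial.derivative_mul]
      simp only [Polynomial.eval_add, Polynomial.eval_mul, Polynomial.eval_sub, Polynomial.eval_X, Polynomial.eval_C, Polynomial.derivative_sub, Polynomial.derivative_X, Polynomial.derivative_C, Polynomial.eval_one, sub_zero]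
      ring
    have hsplit : z * (derivative P).eval z / P.eval z
        = z / (z - r) + z * (derivative Q).eval z / Q.eval z := by
      rw [hder, hQ]
      simp only [Polynomial.eval_mul, Polynomial.eval_sub, Polynomial.eval_X, Polynomial.eval_C]
      field_simp [sub_ne_zero.mpr hzr]
    rw [hsplit, Complex.add_re]
    have h1 := lemA hz (hroots r hr) hzr
    have h2 := ih Q hQ0 hQdeg hQroots z hz hQz
    push_cast
    nlinarith [h1, h2]

lemma lemC {P : ℂ[X]} {n : ℕ} (hP : P ≠ 0) (hdeg : P.natDegree = n)
    (hroots : ∀ w : ℂ, P.eval w = 0 → 1 ≤ ‖w‖)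
    {z : ℂ} (hz : ‖z‖ = 1) :
    ‖(derivative P).eval z‖ ≤
      ‖(n : ℂ) * P.eval z - z * (derivative P).eval z‖ := by
  by_cases hPz : P.eval z = 0
  · rw [hPz]
    simp [norm_mul, hz]
  · set w := z * (derivative P).eval z / P.eval z with hw
    have hre : w.re ≤ n / 2 := lemB n P hP hdeg hroots z hz hPz
    have key : ‖w‖ ≤ ‖(n : ℂ) - w‖ := by
      have h1 : ‖w‖ ^ 2 ≤ ‖(n : ℂ) - w‖ ^ 2 := by
        rw [Complex.sq_norm, Complex.sq_norm, Complex.normSq_apply, Complex.normSq_apply]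
        simp only [Complex.sub_re, Complex.sub_im, Complex.natCast_re, Complex.natCast_im]
        have hn0 : (0:ℝ) ≤ (n:ℝ) := Nat.cast_nonneg n
        nlinarith [hre, hn0]
      nlinarith [norm_nonneg w, norm_nonneg ((n:ℂ) - w), h1]
    have hfac : (n : ℂ) * P.eval z - z * (derivative P).eval z = ((n : ℂ) - w) * P.eval z := by
      rw [hw, sub_mul, div_mul_cancel₀ _ hPz]
    have hzP : z * (derivative P).eval z = w * P.eval z := by rw [hw, div_mul_cancel₀ _ hPz]
    calc ‖(derivative P).eval z‖
        = ‖z * (derivative P).eval z‖ := by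
          rw [norm_mul, hz, one_mul]
      _ = ‖w‖ * ‖P.eval z‖ := by rw [hzP, norm_mul]
      _ ≤ ‖(n:ℂ) - w‖ * ‖P.eval z‖ := by
          exact mul_le_mul_of_nonneg_right key (norm_nonneg _)
      _ = _ := by rw [hfac, norm_mul]


-- upper bound on sphere extends to closed ball
lemma lemD {p : ℂ[X]} {M : ℝ} (hM : ∀ z ∈ sphere (0:ℂ) 1, ‖p.eval z‖ ≤ M)
    {w : ℂ} (hw : ‖w‖ ≤ 1) : ‖p.eval w‖ ≤ M := by
  have hb : Bornology.IsBounded (ball (0:ℂ) 1) := isBounded_ball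
  have hd : DiffContOnCl ℂ (fun z => p.eval z) (ball (0:ℂ) 1) :=
    (p.differentiable).diffContOnCl
  have := Complex.norm_le_of_forall_mem_frontier_norm_le hb hd (fun z hz => by
      rw [frontier_ball _ one_ne_zero] at hz
      simpa using hM z hz)
    (z := w) (by
      rw [closure_ball _ one_ne_zero]
      simpa using hw)
  simpa using this

lemma sphere_infinite : (sphere (0:ℂ) 1).Infinite := by
  have hc : IsPreconnected (sphere (0:ℂ) 1) := by
    refine (isConnected_sphere ?_ 0 zero_le_one).isPreconnected
    rw [Complex.rank_real_complex]
    norm_num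
  refine hc.infinite_of_nontrivial ⟨1, by simp, -1, by simp, by norm_num⟩

theorem erdos_lax (p : Polynomial ℂ) (n : ℕ) (hn : 1 ≤ n) (hdeg : p.natDegree = n)
    (hz : ∀ z : ℂ, p.eval z = 0 → 1 ≤ ‖z‖) :
    polyMaxOn (derivative p) 1 ≤ (n / 2 : ℝ) * polyMaxOn p 1 := by
  have hp0 : p ≠ 0 := by
    intro h; rw [h, Polynomial.natDegree_zero] at hdeg; omega
  have hcont : Continuous fun z : ℂ => ‖p.eval z‖ :=
    continuous_norm.comp p.continuous_aeval
  have hbdd : BddAbove ((fun z => ‖p.eval z‖) '' sphere (0:ℂ) 1) :=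
    ((isCompact_sphere (0:ℂ) 1).image hcont).bddAbove
  set M := polyMaxOn p 1 with hMdef
  have hMle : ∀ z ∈ sphere (0:ℂ) 1, ‖p.eval z‖ ≤ M :=
    fun z hzs => le_csSup hbdd ⟨z, hzs, rfl⟩
  have hMpos : 0 < M := by
    by_contra h
    push_neg at h
    have hsub : sphere (0:ℂ) 1 ⊆ {x | p.IsRoot x} := by
      intro z hzs
      have h1 := hMle z hzs
      have h2 := norm_nonneg (p.eval z)
      have : ‖p.eval z‖ = 0 := le_antisymm (h1.trans h) h2
      simpa [Polynomial.IsRoot] using norm_eq_zero.mp this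
    exact sphere_infinite ((Polynomial.finite_setOf_isRoot hp0).subset hsub)
  have hcpos : 0 < (n : ℝ) * M := by
    have : (0:ℝ) < n := by exact_mod_cast hn
    positivity
  -- pointwise bound on the sphere
  have main : ∀ z ∈ sphere (0:ℂ) 1,
      ‖(derivative p).eval z‖ ≤ (n / 2 : ℝ) * M := by
    intro z hzs
    have hzabs : ‖z‖ = 1 := by
      simpa [Complex.dist_eq] using hzs
    set A : ℂ := (derivative p).eval z with hA
    set B : ℂ := (n : ℂ) * p.eval z - z * A with hB
    have h1 : ‖A‖ ≤ ‖B‖ := lemC hp0 hdeg hz hzabs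
    have key : ∀ l : ℂ, 1 < ‖l‖ →
        ‖A‖ ≤ ‖B - (n : ℂ) * l * (M : ℂ)‖ := by
      intro l hl
      set P : ℂ[X] := p - C (l * M) with hP
      have hPdeg : P.natDegree = n := by
        rw [hP, Polynomial.natDegree_sub_C, hdeg]
      have hP0 : P ≠ 0 := by
        intro h; rw [h, Polynomial.natDegree_zero] at hPdeg; omega
      have hProots : ∀ w : ℂ, P.eval w = 0 → 1 ≤ ‖w‖ := by
        intro w hw
        by_contra hlt
        push_neg at hlt
        have hle : ‖p.eval w‖ ≤ M := lemD hMle hlt.le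
        have heq : p.eval w = l * M := by
          have := hw
          simp only [hP, Polynomial.eval_sub, Polynomial.eval_C] at this
          linear_combination this
        rw [heq, norm_mul, Complex.norm_real, Real.norm_eq_abs, abs_of_pos hMpos] at hle
        nlinarith [hl, hMpos]
      have hkey := lemC hP0 hPdeg hProots hzabs
      have hder : derivative P = derivative p := by
        rw [hP, Polynomial.derivative_sub, Polynomial.derivative_C, sub_zero]
      rw [hder] at hkey
      have : (n : ℂ) * P.eval z - z * (derivative p).eval z = B - (n : ℂ) * l * (M : ℂ) := by
        simp only [hP, Polynomial.eval_sub, Polynomial.eval_C, hB, hA]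
        ring
      rwa [this] at hkey
    have claim1 : ‖B‖ ≤ (n : ℝ) * M := by
      by_contra hgt
      push_neg at hgt
      have hB0 : B ≠ 0 := by
        intro h; rw [h] at hgt; simp at hgt; nlinarith
      have hl : 1 < ‖B / (((n : ℝ) * M : ℝ) : ℂ)‖ := by
        rw [norm_div, Complex.norm_real, Real.norm_eq_abs, abs_of_pos hcpos]
        rw [lt_div_iff₀ hcpos]
        simpa using hgt
      have h0 := key _ hl
      have hzero : B - (n : ℂ) * (B / (((n : ℝ) * M : ℝ) : ℂ)) * (M : ℂ) = 0 := by
        have hnne : (n : ℂ) ≠ 0 := Nat.cast_ne_zero.mpr (by omega)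
        have hMne : ((M : ℝ) : ℂ) ≠ 0 := by exact_mod_cast hMpos.ne'
        push_cast
        field_simp
        ring
      rw [hzero] at h0
      simp only [norm_zero] at h0
      have hA0 : A = 0 := norm_eq_zero.mp (le_antisymm h0 (norm_nonneg _))
      rw [hA0, mul_zero, sub_zero] at hB
      rw [hB, norm_mul, Complex.norm_natCast] at hgt
      have := hMle z hzs
      nlinarith [this, (by exact_mod_cast Nat.cast_nonneg n : (0:ℝ) ≤ (n:ℝ))]
    have claim2 : ‖A‖ + ‖B‖ ≤ (n : ℝ) * M := by
      refine le_of_forall_pos_le_add fun ε hε => ?_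
      by_cases hB0 : B = 0
      · have hl : 1 < ‖((1 + ε / ((n:ℝ) * M) : ℝ) : ℂ)‖ := by
          rw [Complex.norm_real, Real.norm_eq_abs]
          rw [abs_of_pos (by positivity)]
          have : 0 < ε / ((n:ℝ) * M) := by positivity
          linarith
        have h0 := key _ hl
        rw [hB0] at h0 ⊢
        simp only [map_zero, norm_zero, add_zero, zero_sub, norm_neg] at h0 ⊢
        calc ‖A‖ ≤ ‖(n:ℂ) * ((1 + ε / ((n:ℝ) * M) : ℝ) : ℂ) * (M:ℂ)‖ := h0
          _ = (n:ℝ) * (1 + ε / ((n:ℝ) * M)) * M := by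
              rw [norm_mul, norm_mul, Complex.norm_natCast,
                Complex.norm_real, Real.norm_eq_abs, Complex.norm_real, Real.norm_eq_abs, abs_of_pos (by positivity),
                abs_of_pos hMpos]
          _ = (n:ℝ) * M + ε := by field_simp
      · set t : ℝ := ((n:ℝ) * M + ε) / ‖B‖ with ht
        have hBpos : 0 < ‖B‖ := norm_pos_iff.mpr hB0
        have htpos : 0 < t := by rw [ht]; positivity
        clear_value t
        have htB : t * ‖B‖ = (n:ℝ) * M + ε := by
          rw [ht, div_mul_cancel₀ _ hBpos.ne']
        have habs : ‖(t : ℂ) * B / (((n:ℝ) * M : ℝ) : ℂ)‖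
            = t * ‖B‖ / ((n:ℝ) * M) := by
          rw [norm_div, norm_mul, Complex.norm_real, Real.norm_eq_abs, Complex.norm_real, Real.norm_eq_abs,
            abs_of_pos hcpos, abs_of_pos htpos]
        have hl : 1 < ‖(t : ℂ) * B / (((n:ℝ) * M : ℝ) : ℂ)‖ := by
          rw [habs, htB, lt_div_iff₀ hcpos, one_mul]
          linarith
        have h0 := key _ hl
        have heq : B - (n : ℂ) * ((t : ℂ) * B / (((n:ℝ) * M : ℝ) : ℂ)) * (M : ℂ)
            = (1 - (t:ℂ)) * B := by
          have hnne : (n : ℂ) ≠ 0 := Nat.cast_ne_zero.mpr (by omega)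
          have hMne : ((M : ℝ) : ℂ) ≠ 0 := by exact_mod_cast hMpos.ne'
          push_cast
          field_simp
        have ht1 : 1 < t := by
          rw [ht, lt_div_iff₀ hBpos, one_mul]
          linarith [claim1]
        rw [heq, norm_mul] at h0
        have h1t : ‖1 - (t:ℂ)‖ = t - 1 := by
          have hc : (1 : ℂ) - (t:ℂ) = ((1 - t : ℝ) : ℂ) := by push_cast; ring
          rw [hc, Complex.norm_real, Real.norm_eq_abs, abs_of_nonpos (by linarith), neg_sub]
        rw [h1t] at h0
        have hre : (t - 1) * ‖B‖ = (n:ℝ) * M + ε - ‖B‖ := by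
          rw [sub_mul, one_mul, htB]
        linarith
    linarith [h1, claim2]
  refine Real.sSup_le ?_ (by positivity)
  rintro y ⟨w, hw, rfl⟩
  exact main w hw
end

section
/- If p is a complex polynomial of degree n having all its zeros in the closed disk {z : |z| ≤ k} with k ≤ 1, then max_{|z|=1} |p'(z)| ≥ (n/(1+k)) · [max_{|z|=1} |p(z)| + (1/k^{n−1}) · min_{|z|=k} |p(z)|]. -/
open Polynomial Metric Complex

noncomputable def polyMinOn (p : Polynomial ℂ) (r : ℝ) : ℝ :=
  sInf ((fun z => ‖p.eval z‖) '' sphere (0 : ℂ) r)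

noncomputable def Complex.abs : AbsoluteValue ℂ ℝ := NormedField.toAbsoluteValue ℂ

lemma Complex.abs_apply (z : ℂ) : Complex.abs z = ‖z‖ := rfl

lemma Complex.abs_conj (z : ℂ) : Complex.abs ((starRingEnd ℂ) z) = Complex.abs z := by
  simp [Complex.abs_apply]

lemma Complex.abs_ofReal (r : ℝ) : Complex.abs (r : ℂ) = |r| := by
  simp [Complex.abs_apply]

lemma Complex.normSq_eq_abs (z : ℂ) : Complex.normSq z = Complex.abs z ^ 2 :=
  Complex.normSq_eq_norm_sq z

lemma Complex.abs_re_le_abs (z : ℂ) : |z.re| ≤ Complex.abs z := Complex.abs_re_le_norm z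

lemma Complex.re_le_abs (z : ℂ) : z.re ≤ Complex.abs z := Complex.re_le_norm z

lemma Complex.continuous_abs : Continuous Complex.abs := continuous_norm

lemma claimA {k : ℝ} (hk1 : k ≤ 1) {z r : ℂ} (hz : Complex.abs z = 1)
    (hr : Complex.abs r ≤ k) :
    Complex.normSq (z - r) ≤ (1 + k) * (z * (starRingEnd ℂ) (z - r)).re := by
  have hnz : Complex.normSq z = 1 := by rw [normSq_eq_abs, hz]; norm_num
  set x := (z * (starRingEnd ℂ) r).re with hxdef
  have h1 : (z * (starRingEnd ℂ) (z - r)).re = 1 - x := by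
    rw [map_sub, mul_sub, Complex.sub_re, Complex.mul_conj, hnz]
    simp [hxdef, Complex.mul_re, Complex.conj_re, Complex.conj_im]
  have h2 : Complex.normSq (z - r) = 1 - 2 * x + Complex.normSq r := by
    have : ((z - r) * (starRingEnd ℂ) (z - r)) =
        (Complex.normSq z : ℂ) - z * (starRingEnd ℂ) r - (starRingEnd ℂ) (z * (starRingEnd ℂ) r) + (Complex.normSq r : ℂ) := by
      rw [map_sub, ← Complex.mul_conj, ← Complex.mul_conj]
      simp [map_mul]
      ring
    have h3 := congrArg Complex.re this
    rw [Complex.mul_conj, Complex.ofReal_re] at h3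
    simp [Complex.sub_re, Complex.add_re, Complex.conj_re, hnz] at h3
    rw [h3, hxdef]
    simp [Complex.mul_re, Complex.conj_re, Complex.conj_im]
    ring
  set ρ := Complex.abs r with hρdef
  have hρ0 : 0 ≤ ρ := Complex.abs.nonneg r
  have hnr : Complex.normSq r = ρ ^ 2 := by rw [normSq_eq_abs]
  have hx : -ρ ≤ x := by
    have := Complex.abs_re_le_abs (z * (starRingEnd ℂ) r)
    rw [map_mul, hz, Complex.abs_conj, one_mul] at this
    have := (abs_le.mp this).1
    linarith
  rw [h1, h2, hnr]
  nlinarith [mul_nonneg (sub_nonneg.mpr hr) (by linarith : (0:ℝ) ≤ 1 + ρ),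
    mul_nonneg (by linarith : (0:ℝ) ≤ 1 - k) (by linarith : (0:ℝ) ≤ x + ρ)]

lemma key_multiset {k : ℝ} (hk1 : k ≤ 1) {z : ℂ} (hz : Complex.abs z = 1)
    (s : Multiset ℂ) (hs : ∀ r ∈ s, Complex.abs r ≤ k) :
    (s.card : ℝ) * Complex.normSq (eval z (s.map fun r => X - C r).prod) ≤
      (1 + k) * (z * eval z (derivative (s.map fun r => X - C r).prod) *
        (starRingEnd ℂ) (eval z (s.map fun r => X - C r).prod)).re := by
  induction s using Multiset.induction_on with
  | empty => simp
  | cons r s ih =>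
    have hr : Complex.abs r ≤ k := hs r (Multiset.mem_cons_self r s)
    have ih' := ih (fun a ha => hs a (Multiset.mem_cons_of_mem ha))
    have hk0 : (0:ℝ) ≤ k := le_trans (Complex.abs.nonneg r) hr
    set g := (s.map fun r => X - C r).prod with hg
    have hmap : ((r ::ₘ s).map fun r => X - C r).prod = (X - C r) * g := by
      rw [Multiset.map_cons, Multiset.prod_cons]
    set G := eval z g with hG
    set G' := eval z (derivative g) with hG'
    set u := z - r with hu
    have he1 : eval z ((X - C r) * g) = u * G := by simp [hu, hG]
    have he2 : derivative ((X - C r) * g) = g + (X - C r) * derivative g := by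
      rw [derivative_mul]; simp
    have he3 : eval z (derivative ((X - C r) * g)) = G + u * G' := by
      rw [he2]; simp [hu, hG, hG']
    rw [hmap, he1, he3]
    have hiden : z * (G + u * G') * (starRingEnd ℂ) (u * G) =
        (z * (starRingEnd ℂ) u) * (Complex.normSq G : ℂ)
          + (Complex.normSq u : ℂ) * (z * G' * (starRingEnd ℂ) G) := by
      rw [← Complex.mul_conj, ← Complex.mul_conj, map_mul]
      ring
    rw [hiden]
    have hre : ((z * (starRingEnd ℂ) u) * (Complex.normSq G : ℂ)
          + (Complex.normSq u : ℂ) * (z * G' * (starRingEnd ℂ) G)).re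
        = (z * (starRingEnd ℂ) u).re * Complex.normSq G
          + Complex.normSq u * (z * G' * (starRingEnd ℂ) G).re := by
      simp [Complex.add_re, Complex.mul_re, Complex.ofReal_re, Complex.ofReal_im]
    rw [hre]
    have hcA := claimA hk1 hz hr
    have hnsG : 0 ≤ Complex.normSq G := Complex.normSq_nonneg G
    have hnsU : 0 ≤ Complex.normSq u := Complex.normSq_nonneg u
    have e1 : Complex.normSq u * Complex.normSq G ≤
        (1 + k) * ((z * (starRingEnd ℂ) u).re * Complex.normSq G) := by
      have := mul_le_mul_of_nonneg_right hcA hnsG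
      linarith [this]
    have e2 : Complex.normSq u * ((s.card : ℝ) * Complex.normSq G) ≤
        Complex.normSq u * ((1 + k) * (z * G' * (starRingEnd ℂ) G).re) :=
      mul_le_mul_of_nonneg_left ih' hnsU
    have hcard : (((r ::ₘ s).card : ℝ)) = (s.card : ℝ) + 1 := by
      rw [Multiset.card_cons]; push_cast; ring
    rw [hcard, map_mul]
    nlinarith [e1, e2]

lemma turan_pointwise {k : ℝ} (hk0 : 0 < k) (hk1 : k ≤ 1) (q : Polynomial ℂ)
    (hroots : ∀ w : ℂ, q.eval w = 0 → Complex.abs w ≤ k) {z : ℂ}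
    (hz : Complex.abs z = 1) :
    (q.natDegree : ℝ) * Complex.abs (q.eval z) ≤
      (1 + k) * Complex.abs ((derivative q).eval z) := by
  have hsplit : Splits q := IsAlgClosed.splits q
  have hcard : q.roots.card = q.natDegree := splits_iff_card_roots.mp hsplit
  have hfac : q = C q.leadingCoeff * (q.roots.map fun a => X - C a).prod :=
    hsplit.eq_prod_roots
  set P := (q.roots.map fun a => X - C a).prod with hP
  have hbound : ∀ r ∈ q.roots, Complex.abs r ≤ k := fun r hr =>
    hroots r (isRoot_of_mem_roots hr)
  have hkey := key_multiset hk1 hz q.roots hbound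
  rw [hcard, ← hP] at hkey
  set Pz := eval z P with hPz
  set Pz' := eval z (derivative P) with hPz'
  -- from hkey: n * normSq Pz ≤ (1+k) * re(...) ≤ (1+k) * |Pz'| * |Pz|
  have hre : (z * Pz' * (starRingEnd ℂ) Pz).re ≤ Complex.abs Pz' * Complex.abs Pz := by
    calc (z * Pz' * (starRingEnd ℂ) Pz).re ≤ Complex.abs (z * Pz' * (starRingEnd ℂ) Pz) :=
          Complex.re_le_abs _
      _ = Complex.abs Pz' * Complex.abs Pz := by
          rw [map_mul, map_mul, Complex.abs_conj, hz, one_mul]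
  have h1k : (0:ℝ) < 1 + k := by linarith
  have hstep : (q.natDegree : ℝ) * Complex.abs Pz ≤ (1 + k) * Complex.abs Pz' := by
    rcases eq_or_lt_of_le (Complex.abs.nonneg Pz) with h0 | h0
    · rw [← h0, mul_zero]
      positivity
    · have h2 : (q.natDegree : ℝ) * (Complex.abs Pz * Complex.abs Pz) ≤
          (1 + k) * (Complex.abs Pz' * Complex.abs Pz) := by
        have := mul_le_mul_of_nonneg_left hre (le_of_lt h1k)
        calc (q.natDegree : ℝ) * (Complex.abs Pz * Complex.abs Pz)
            = (q.natDegree : ℝ) * Complex.normSq Pz := by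
              rw [Complex.normSq_eq_abs]; ring
          _ ≤ (1 + k) * (z * Pz' * (starRingEnd ℂ) Pz).re := hkey
          _ ≤ (1 + k) * (Complex.abs Pz' * Complex.abs Pz) := this
      have := mul_le_mul_of_nonneg_right (le_refl (1:ℝ)) (le_of_lt h0)
      nlinarith [h2, h0]
  have heq : q.eval z = q.leadingCoeff * Pz := by
    conv_lhs => rw [hfac]
    simp [hPz]
  have heq' : (derivative q).eval z = q.leadingCoeff * Pz' := by
    conv_lhs => rw [hfac]
    rw [derivative_C_mul]
    simp [hPz']
  rw [heq, heq', map_mul, map_mul]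
  calc (q.natDegree : ℝ) * (Complex.abs q.leadingCoeff * Complex.abs Pz)
      = Complex.abs q.leadingCoeff * ((q.natDegree : ℝ) * Complex.abs Pz) := by ring
    _ ≤ Complex.abs q.leadingCoeff * ((1 + k) * Complex.abs Pz') :=
        mul_le_mul_of_nonneg_left hstep (Complex.abs.nonneg _)
    _ = (1 + k) * (Complex.abs q.leadingCoeff * Complex.abs Pz') := by ring

lemma growth {k m : ℝ} (hk0 : 0 < k) (p : Polynomial ℂ) {n : ℕ} (hn : 1 ≤ n)
    (hdeg : p.natDegree = n)
    (hroots : ∀ w : ℂ, p.eval w = 0 → Complex.abs w ≤ k)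
    (hm : ∀ z : ℂ, Complex.abs z = k → m ≤ Complex.abs (p.eval z)) (hm0 : 0 < m) :
    m ≤ k ^ n * Complex.abs p.leadingCoeff ∧
      ∀ w : ℂ, k ≤ Complex.abs w →
        m * Complex.abs w ^ n ≤ k ^ n * Complex.abs (p.eval w) := by
  have hp0 : p ≠ 0 := fun h => by simp [h] at hdeg; omega
  set H : Polynomial ℂ :=
    ∑ j ∈ Finset.range (n + 1), C (p.coeff j * (k : ℂ) ^ (2 * j)) * X ^ (n - j) with hH
  have hkC : (k : ℂ) ≠ 0 := by exact_mod_cast hk0.ne'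
  have heval : ∀ u : ℂ, u ≠ 0 → eval u H = u ^ n * p.eval ((k : ℂ) ^ 2 / u) := by
    intro u hu
    rw [hH, eval_finset_sum]
    have hev : p.eval ((k : ℂ) ^ 2 / u) =
        ∑ j ∈ Finset.range (n + 1), p.coeff j * ((k : ℂ) ^ 2 / u) ^ j := by
      rw [← hdeg]; exact eval_eq_sum_range _
    rw [hev, Finset.mul_sum]
    refine Finset.sum_congr rfl fun j hj => ?_
    have hjn : j ≤ n := Nat.lt_succ_iff.mp (Finset.mem_range.mp hj)
    rw [eval_mul, eval_C, eval_pow, eval_X, div_pow, pow_mul]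
    rw [mul_comm (u ^ n)]
    rw [mul_assoc, ← pow_sub_mul_pow u hjn]
    field_simp
  have heval0 : eval 0 H = p.leadingCoeff * (k : ℂ) ^ (2 * n) := by
    rw [hH, eval_finset_sum]
    rw [Finset.sum_eq_single n]
    · simp [Nat.sub_self, leadingCoeff, hdeg]
    · intro j hj hjn
      have hjn' : j < n := lt_of_le_of_ne (Nat.lt_succ_iff.mp (Finset.mem_range.mp hj)) hjn
      have : n - j ≠ 0 := Nat.sub_ne_zero_of_lt hjn'
      simp [eval_pow, zero_pow this]
    · intro h
      exact absurd (Finset.self_mem_range_succ n) h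
  have hHne : ∀ u ∈ closedBall (0 : ℂ) k, eval u H ≠ 0 := by
    intro u hu
    rcases eq_or_ne u 0 with rfl | hu0
    · rw [heval0]
      exact mul_ne_zero (leadingCoeff_ne_zero.mpr hp0) (pow_ne_zero _ hkC)
    · rw [heval u hu0]
      refine mul_ne_zero (pow_ne_zero _ hu0) fun hval => ?_
      have habs : Complex.abs ((k : ℂ) ^ 2 / u) ≤ k := hroots _ hval
      have huk : Complex.abs u ≤ k := by
        rwa [mem_closedBall_zero_iff] at hu
      have hu0' : 0 < Complex.abs u := Complex.abs.pos hu0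
      rw [map_div₀, map_pow, Complex.abs_ofReal, abs_of_pos hk0, div_le_iff₀ hu0'] at habs
      have huk' : Complex.abs u = k := le_antisymm huk (by nlinarith)
      have : Complex.abs ((k : ℂ) ^ 2 / u) = k := by
        rw [map_div₀, map_pow, Complex.abs_ofReal, abs_of_pos hk0, huk']
        field_simp
      have := hm _ this
      rw [hval] at this
      simp at this
      linarith
  have hballbound : ∀ u ∈ closedBall (0 : ℂ) k, m * k ^ n ≤ Complex.abs (eval u H) := by
    have hmkn : (0:ℝ) < m * k ^ n := mul_pos hm0 (pow_pos hk0 n)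
    have hmain : ∀ u ∈ closedBall (0 : ℂ) k,
        ‖((m * k ^ n : ℝ) : ℂ) / eval u H‖ ≤ 1 := by
      intro u hu
      refine Complex.norm_le_of_forall_mem_frontier_norm_le
        (isBounded_closedBall (x := (0:ℂ)) (r := k))
        (f := fun v => ((m * k ^ n : ℝ) : ℂ) / eval v H) ?_ ?_ ?_
      · constructor
        · exact DifferentiableOn.div (differentiableOn_const _)
            (H.differentiable.differentiableOn) hHne
        · rw [closure_closedBall]
          exact ContinuousOn.div continuousOn_const H.continuous.continuousOn hHne
      · intro w hw
        rw [frontier_closedBall (0 : ℂ) hk0.ne'] at hw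
        have hwk : Complex.abs w = k := by rwa [mem_sphere_zero_iff_norm] at hw
        have hw0 : w ≠ 0 := by
          intro h; rw [h] at hwk; simp at hwk; linarith
        have habsw : Complex.abs ((k : ℂ) ^ 2 / w) = k := by
          rw [map_div₀, map_pow, Complex.abs_ofReal, abs_of_pos hk0, hwk]
          field_simp
        have hHw : Complex.abs (eval w H) = k ^ n * Complex.abs (p.eval ((k : ℂ) ^ 2 / w)) := by
          rw [heval w hw0, map_mul, map_pow, hwk]
        have hlow : m ≤ Complex.abs (p.eval ((k : ℂ) ^ 2 / w)) := hm _ habsw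
        have hHwpos : 0 < Complex.abs (eval w H) := by
          rw [hHw]
          have : 0 < Complex.abs (p.eval ((k : ℂ) ^ 2 / w)) := lt_of_lt_of_le hm0 hlow
          positivity
        show ‖((m * k ^ n : ℝ) : ℂ) / eval w H‖ ≤ 1
        rw [norm_div, Complex.norm_real, Real.norm_eq_abs, abs_of_pos hmkn]
        show m * k ^ n / Complex.abs (eval w H) ≤ 1
        rw [div_le_one hHwpos, hHw]
        calc m * k ^ n ≤ Complex.abs (p.eval ((k:ℂ)^2 / w)) * k ^ n :=
              mul_le_mul_of_nonneg_right hlow (by positivity)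
          _ = k ^ n * Complex.abs (p.eval ((k:ℂ)^2 / w)) := by ring
      · rw [closure_closedBall]; exact hu
    intro u hu
    have h1 := hmain u hu
    have hHu : eval u H ≠ 0 := hHne u hu
    have hHupos : 0 < Complex.abs (eval u H) := Complex.abs.pos hHu
    rw [norm_div, Complex.norm_real, Real.norm_eq_abs, abs_of_pos hmkn] at h1
    have h2 : m * k ^ n / Complex.abs (eval u H) ≤ 1 := h1
    rwa [div_le_one hHupos] at h2
  constructor
  · have h0 : (0 : ℂ) ∈ closedBall (0 : ℂ) k := by
      simp [mem_closedBall_zero_iff]; linarith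
    have := hballbound 0 h0
    rw [heval0, map_mul, map_pow, Complex.abs_ofReal, abs_of_pos hk0] at this
    have hk2n : k ^ (2 * n) = k ^ n * k ^ n := by rw [two_mul, pow_add]
    rw [hk2n] at this
    have hkn : (0:ℝ) < k ^ n := by positivity
    nlinarith
  · intro w hw
    have hw0 : w ≠ 0 := by
      intro h; rw [h] at hw; simp at hw; linarith
    have hwpos : 0 < Complex.abs w := Complex.abs.pos hw0
    set u : ℂ := (k : ℂ) ^ 2 / w with hudef
    have hu0 : u ≠ 0 := div_ne_zero (pow_ne_zero _ hkC) hw0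
    have huabs : Complex.abs u = k ^ 2 / Complex.abs w := by
      rw [hudef, map_div₀, map_pow, Complex.abs_ofReal, abs_of_pos hk0]
    have humem : u ∈ closedBall (0 : ℂ) k := by
      rw [mem_closedBall_zero_iff]
      show Complex.abs u ≤ k
      rw [huabs, div_le_iff₀ hwpos]
      nlinarith
    have hw' : (k : ℂ) ^ 2 / u = w := by
      rw [hudef]; field_simp
    have hb := hballbound u humem
    rw [heval u hu0, hw', map_mul, map_pow, huabs, div_pow] at hb
    have hwn : (0:ℝ) < Complex.abs w ^ n := by positivity
    have hkn : (0:ℝ) < k ^ n := by positivity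
    have h3 : m * k ^ n * Complex.abs w ^ n ≤ (k ^ 2) ^ n * Complex.abs (p.eval w) := by
      have h4 := mul_le_mul_of_nonneg_right hb hwn.le
      calc m * k ^ n * Complex.abs w ^ n
          ≤ (k ^ 2) ^ n / Complex.abs w ^ n * Complex.abs (p.eval w) * Complex.abs w ^ n := h4
        _ = (k ^ 2) ^ n * Complex.abs (p.eval w) := by field_simp
    have hk2 : (k ^ 2) ^ n = k ^ n * k ^ n := by rw [← pow_mul, two_mul, pow_add]
    rw [hk2] at h3
    nlinarith [h3, hkn]

lemma pert {k m : ℝ} (hk0 : 0 < k) (hk1 : k ≤ 1) (p : Polynomial ℂ) {n : ℕ}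
    (hn : 1 ≤ n) (hdeg : p.natDegree = n)
    (hroots : ∀ w : ℂ, p.eval w = 0 → Complex.abs w ≤ k)
    (hm : ∀ z : ℂ, Complex.abs z = k → m ≤ Complex.abs (p.eval z)) (hm0 : 0 < m)
    (μ : ℂ) (hμ : Complex.abs μ < m / k ^ n) {z0 : ℂ} (hz0 : Complex.abs z0 = 1) :
    (n : ℝ) * Complex.abs ((p + C μ * X ^ n).eval z0) ≤
      (1 + k) * Complex.abs ((derivative (p + C μ * X ^ n)).eval z0) ∧
      (p + C μ * X ^ n).eval z0 ≠ 0 := by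
  obtain ⟨hlead, hgrow⟩ := growth hk0 p hn hdeg hroots hm hm0
  set T := p + C μ * X ^ n with hT
  have hkn : (0:ℝ) < k ^ n := pow_pos hk0 n
  have ha : m / k ^ n ≤ Complex.abs p.leadingCoeff := by
    rw [div_le_iff₀ hkn]; linarith [hlead]
  have hcoeffn : T.coeff n = p.coeff n + μ := by
    rw [hT, coeff_add, coeff_C_mul, coeff_X_pow, if_pos rfl, mul_one]
  have hpcn : p.coeff n = p.leadingCoeff := by rw [← hdeg]; rfl
  have hcne : T.coeff n ≠ 0 := by
    rw [hcoeffn, hpcn]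
    intro h
    have h2 : Complex.abs p.leadingCoeff = Complex.abs μ := by
      have : p.leadingCoeff = -μ := by linear_combination h
      rw [this, map_neg_eq_map]
    rw [h2] at ha
    linarith
  have hTdeg : T.natDegree = n := by
    refine le_antisymm ?_ (le_natDegree_of_ne_zero hcne)
    rw [hT]
    refine le_trans (natDegree_add_le _ _) ?_
    simp only [max_le_iff]
    constructor
    · rw [hdeg]
    · exact le_trans (natDegree_C_mul_le _ _) (le_of_eq (natDegree_X_pow n))
  have hTroots : ∀ w : ℂ, T.eval w = 0 → Complex.abs w < k := by
    intro w hw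
    by_contra hcon
    push_neg at hcon
    have hwn : (0:ℝ) < Complex.abs w ^ n := by
      have : 0 < Complex.abs w := lt_of_lt_of_le hk0 hcon
      positivity
    have hev : p.eval w = -(μ * w ^ n) := by
      rw [hT] at hw
      simp only [eval_add, eval_mul, eval_C, eval_pow, eval_X] at hw
      linear_combination hw
    have h1 := hgrow w hcon
    rw [hev, map_neg_eq_map, map_mul, map_pow] at h1
    have h2 : k ^ n * (Complex.abs μ * Complex.abs w ^ n) <
        k ^ n * ((m / k ^ n) * Complex.abs w ^ n) := by
      apply mul_lt_mul_of_pos_left _ hkn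
      exact mul_lt_mul_of_pos_right hμ hwn
    have h3 : k ^ n * ((m / k ^ n) * Complex.abs w ^ n) = m * Complex.abs w ^ n := by
      field_simp
    nlinarith
  constructor
  · have := turan_pointwise hk0 hk1 T
      (fun w hw => le_of_lt (hTroots w hw)) hz0
    rwa [hTdeg] at this
  · intro h
    have := hTroots z0 h
    rw [hz0] at this
    linarith

lemma cont_abs_eval (p : Polynomial ℂ) : Continuous fun z : ℂ => Complex.abs (p.eval z) :=
  Complex.continuous_abs.comp p.continuous_aeval

lemma exists_max (p : Polynomial ℂ) {r : ℝ} (hr : 0 ≤ r) :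
    ∃ z0 : ℂ, Complex.abs z0 = r ∧ polyMaxOn p r = Complex.abs (p.eval z0) ∧
      ∀ z : ℂ, Complex.abs z = r → Complex.abs (p.eval z) ≤ Complex.abs (p.eval z0) := by
  have hne : (sphere (0 : ℂ) r).Nonempty := NormedSpace.sphere_nonempty.mpr hr
  obtain ⟨z0, hz0mem, hz0max⟩ := (isCompact_sphere (0:ℂ) r).exists_isMaxOn hne
    (cont_abs_eval p).continuousOn
  have hz0 : Complex.abs z0 = r := by rwa [mem_sphere_zero_iff_norm] at hz0mem
  refine ⟨z0, hz0, ?_, fun z hz => hz0max (by rwa [mem_sphere_zero_iff_norm])⟩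
  refine IsGreatest.csSup_eq ⟨Set.mem_image_of_mem _ hz0mem, ?_⟩
  rintro y ⟨z, hz, rfl⟩
  exact hz0max hz

lemma exists_min (p : Polynomial ℂ) {r : ℝ} (hr : 0 ≤ r) :
    ∃ z0 : ℂ, Complex.abs z0 = r ∧ polyMinOn p r = Complex.abs (p.eval z0) ∧
      ∀ z : ℂ, Complex.abs z = r → Complex.abs (p.eval z0) ≤ Complex.abs (p.eval z) := by
  have hne : (sphere (0 : ℂ) r).Nonempty := NormedSpace.sphere_nonempty.mpr hr
  obtain ⟨z0, hz0mem, hz0min⟩ := (isCompact_sphere (0:ℂ) r).exists_isMinOn hne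
    (cont_abs_eval p).continuousOn
  have hz0 : Complex.abs z0 = r := by rwa [mem_sphere_zero_iff_norm] at hz0mem
  refine ⟨z0, hz0, ?_, fun z hz => hz0min (by rwa [mem_sphere_zero_iff_norm])⟩
  refine IsLeast.csInf_eq ⟨Set.mem_image_of_mem _ hz0mem, ?_⟩
  rintro y ⟨z, hz, rfl⟩
  exact hz0min hz

lemma le_maxOn (p : Polynomial ℂ) {r : ℝ} {z : ℂ} (hz : Complex.abs z = r) :
    Complex.abs (p.eval z) ≤ polyMaxOn p r := by
  refine le_csSup ?_ ⟨z, by rwa [mem_sphere_zero_iff_norm], rfl⟩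
  exact ((isCompact_sphere (0:ℂ) r).image (cont_abs_eval p)).bddAbove

set_option maxHeartbeats 1000000 in
theorem govil_lower (p : Polynomial ℂ) (n : ℕ) (k : ℝ) (hk0 : 0 < k) (hk : k ≤ 1)
    (hn : 1 ≤ n) (hdeg : p.natDegree = n)
    (hz : ∀ z : ℂ, p.eval z = 0 → ‖z‖ ≤ k) :
    (n / (1 + k)) * (polyMaxOn p 1 + (1 / k ^ (n - 1)) * polyMinOn p k) ≤
      polyMaxOn (derivative p) 1 := by
  have hz : ∀ z : ℂ, p.eval z = 0 → Complex.abs z ≤ k := hz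
  have h1k : (0:ℝ) < 1 + k := by linarith
  have hkn : (0:ℝ) < k ^ n := pow_pos hk0 n
  have hkn1 : (0:ℝ) < k ^ (n - 1) := pow_pos hk0 _
  have hn' : 0 < n := hn
  have hn0 : (0:ℝ) < (n:ℝ) := by exact_mod_cast hn'
  have hnC : ((n : ℂ)) ≠ 0 := by exact_mod_cast hn'.ne'
  have hkpow : k ^ (n - 1) * k = k ^ n := by
    rw [← pow_succ, Nat.sub_add_cancel hn]
  obtain ⟨z0, hz0, hMeq, hMmax⟩ := exists_max p (by norm_num : (0:ℝ) ≤ 1)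
  obtain ⟨zm, hzm, hmeq, hmmin⟩ := exists_min p hk0.le
  set M := polyMaxOn p 1 with hM
  set m := polyMinOn p k with hm
  set A := Complex.abs ((derivative p).eval z0) with hA
  clear_value M m A
  have hm0 : 0 ≤ m := by rw [hmeq]; exact Complex.abs.nonneg _
  have hmlow : ∀ z : ℂ, Complex.abs z = k → m ≤ Complex.abs (p.eval z) := by
    intro z hzk; rw [hmeq]; exact hmmin z hzk
  have hAle : A ≤ polyMaxOn (derivative p) 1 := by rw [hA]; exact le_maxOn _ hz0
  have hA0 : 0 ≤ A := by rw [hA]; exact Complex.abs.nonneg _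
  have hnz0 : z0 ≠ 0 := by
    intro h; rw [h] at hz0; simp at hz0
  have hz0pow : z0 ^ (n - 1) ≠ 0 := pow_ne_zero _ hnz0
  -- key inequality
  have key : (n : ℝ) * M + (n : ℝ) * ((1 / k ^ (n-1)) * m) ≤ (1 + k) * A := by
    rcases eq_or_lt_of_le hm0 with hmz | hmpos
    · -- m = 0
      have ht := turan_pointwise hk0 hk p hz hz0
      rw [hdeg, ← hMeq, ← hA] at ht
      rw [← hmz]
      simpa using ht
    · -- m > 0
      have hderiv : ∀ μ : ℂ, (derivative (p + C μ * X ^ n)).eval z0 =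
          (derivative p).eval z0 + μ * ((n : ℂ) * z0 ^ (n - 1)) := by
        intro μ
        rw [derivative_add, derivative_C_mul, derivative_X_pow]
        simp [mul_assoc]
      -- Step 1 : n*m/k^n ≤ A
      have step1 : (n : ℝ) * m / k ^ n ≤ A := by
        by_contra hcon
        push_neg at hcon
        set μ : ℂ := -((derivative p).eval z0) / ((n : ℂ) * z0 ^ (n - 1)) with hμdef
        clear_value μ
        have hμabs : Complex.abs μ = A / n := by
          rw [hμdef, map_div₀, map_neg_eq_map, map_mul, map_pow, hz0, one_pow, mul_one, hA]
          norm_num [Complex.abs_apply]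
        have hμlt : Complex.abs μ < m / k ^ n := by
          rw [hμabs, div_lt_div_iff₀ hn0 hkn]
          have h5 : A * k ^ n < ((n:ℝ) * m / k ^ n) * k ^ n :=
            mul_lt_mul_of_pos_right hcon hkn
          have h6 : ((n:ℝ) * m / k ^ n) * k ^ n = (n:ℝ) * m := div_mul_cancel₀ _ hkn.ne'
          nlinarith [h5, h6]
        obtain ⟨hineq, hne⟩ := pert hk0 hk p hn hdeg hz hmlow hmpos μ hμlt hz0
        have hTd : (derivative (p + C μ * X ^ n)).eval z0 = 0 := by
          rw [hderiv μ, hμdef]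
          field_simp
          ring
        rw [hTd, map_zero, mul_zero] at hineq
        have habs0 : Complex.abs ((p + C μ * X ^ n).eval z0) = 0 := by
          nlinarith [Complex.abs.nonneg ((p + C μ * X ^ n).eval z0)]
        exact hne (Complex.abs.eq_zero.mp habs0)
      have hApos : 0 < A := by
        have : (0:ℝ) < (n:ℝ) * m / k ^ n := by positivity
        linarith
      have hAC : (A : ℂ) ≠ 0 := by exact_mod_cast hApos.ne'
      -- Step 3 : for every t ∈ [0,1)
      have step3 : ∀ t : ℝ, 0 ≤ t → t < 1 →
          (n : ℝ) * M + t * ((n : ℝ) * m / k ^ (n - 1)) ≤ (1 + k) * A := by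
        intro t ht0 ht1
        set c : ℝ := t * m / k ^ n with hc
        clear_value c
        have hc0 : 0 ≤ c := by rw [hc]; positivity
        set μ : ℂ := -(c : ℂ) * ((derivative p).eval z0) / ((A : ℂ) * z0 ^ (n - 1)) with hμdef
        clear_value μ
        have hμabs : Complex.abs μ = c := by
          rw [hμdef, map_div₀, map_mul, map_mul, map_neg_eq_map, map_pow, hz0, one_pow,
            mul_one, Complex.abs_ofReal, Complex.abs_ofReal, _root_.abs_of_nonneg hc0,
            _root_.abs_of_pos hApos, hA]
          rw [← hA]
          field_simp
        have hμlt : Complex.abs μ < m / k ^ n := by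
          rw [hμabs, hc, div_lt_div_iff₀ hkn hkn]
          nlinarith [mul_pos (mul_pos (sub_pos.mpr ht1) hmpos) hkn]
        obtain ⟨hineq, -⟩ := pert hk0 hk p hn hdeg hz hmlow hmpos μ hμlt hz0
        have hfrac : (n : ℝ) * c / A ≤ t := by
          rw [div_le_iff₀ hApos]
          have h2 : (n:ℝ) * m / k ^ n ≤ A := step1
          have h3 : (n:ℝ) * c = t * ((n:ℝ) * m / k ^ n) := by
            rw [hc]; field_simp
          rw [h3]
          exact mul_le_mul_of_nonneg_left h2 ht0
        have hfrac0 : 0 ≤ (n : ℝ) * c / A := by positivity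
        have hTd : (derivative (p + C μ * X ^ n)).eval z0 =
            ((1 : ℂ) - (((n : ℝ) * c / A : ℝ) : ℂ)) * (derivative p).eval z0 := by
          rw [hderiv μ, hμdef]
          push_cast
          field_simp
          ring
        have hTdabs : Complex.abs ((derivative (p + C μ * X ^ n)).eval z0) =
            A - (n:ℝ) * c := by
          rw [hTd, map_mul, ← hA]
          have h1 : ((1 : ℂ) - (((n : ℝ) * c / A : ℝ) : ℂ)) =
              (((1 - (n:ℝ) * c / A : ℝ)) : ℂ) := by push_cast; ring
          rw [h1, Complex.abs_ofReal, _root_.abs_of_nonneg (by linarith : (0:ℝ) ≤ 1 - (n:ℝ)*c/A)]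
          field_simp
        -- lower bound for |T(z0)|
        have hTv : M - c ≤ Complex.abs ((p + C μ * X ^ n).eval z0) := by
          have he : (p + C μ * X ^ n).eval z0 = p.eval z0 + μ * z0 ^ n := by
            rw [eval_add, eval_mul, eval_C, eval_pow, eval_X]
          have htri : Complex.abs (p.eval z0) ≤
              Complex.abs (p.eval z0 + μ * z0 ^ n) + Complex.abs (μ * z0 ^ n) := by
            have := Complex.abs.add_le (p.eval z0 + μ * z0 ^ n) (-(μ * z0 ^ n))
            simpa using this
          have habs2 : Complex.abs (μ * z0 ^ n) = c := by
            rw [map_mul, map_pow, hz0, one_pow, mul_one, hμabs]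
          rw [he, hMeq]
          linarith [htri, habs2]
        -- combine
        have h6 := mul_le_mul_of_nonneg_left hTv hn0.le
        have h7 := le_trans h6 hineq
        rw [hTdabs] at h7
        have hchain : (n : ℝ) * (M - c) ≤ (1 + k) * (A - (n:ℝ) * c) := h7
        have hcc : t * ((n : ℝ) * m / k ^ (n - 1)) = k * ((n:ℝ) * c) := by
          rw [hc, ← hkpow]
          field_simp
        rw [hcc]
        nlinarith [hchain]
      -- take t → 1
      set B : ℝ := (1 + k) * A - (n : ℝ) * M with hB
      clear_value B
      set c : ℝ := (n : ℝ) * m / k ^ (n - 1) with hcdef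
      clear_value c
      have hcpos : 0 < c := by rw [hcdef]; positivity
      have hB0 : 0 ≤ B := by
        have h0 := step3 0 le_rfl (by norm_num)
        rw [hB]; linarith
      have hfin : c ≤ B := by
        by_contra hcon
        push_neg at hcon
        set t : ℝ := (B / c + 1) / 2 with ht
        have htlt : B / c < 1 := by rw [div_lt_one hcpos]; linarith
        have ht0 : 0 ≤ t := by
          have : 0 ≤ B / c := div_nonneg hB0 hcpos.le
          rw [ht]; linarith
        have ht1 : t < 1 := by rw [ht]; linarith
        have h4 := step3 t ht0 ht1
        have htc : B < t * c := by
          rw [ht]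
          have h5 : (B / c + 1) / 2 * c = (B + c) / 2 := by
            field_simp
          rw [h5]
          linarith
        rw [hB] at htc
        linarith
      have hceq : (n:ℝ) * ((1 / k ^ (n-1)) * m) = c := by
        rw [hcdef]; field_simp
      linarith [hfin, hceq, hB0]
  -- final arithmetic
  have hfinal : (n:ℝ) * (M + (1 / k ^ (n-1)) * m) ≤ (1 + k) * polyMaxOn (derivative p) 1 := by
    have h2 : (1 + k) * A ≤ (1 + k) * polyMaxOn (derivative p) 1 :=
      mul_le_mul_of_nonneg_left hAle h1k.le
    calc (n:ℝ) * (M + (1 / k ^ (n-1)) * m)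
        = (n : ℝ) * M + (n : ℝ) * ((1 / k ^ (n-1)) * m) := by ring
      _ ≤ (1 + k) * A := key
      _ ≤ (1 + k) * polyMaxOn (derivative p) 1 := h2
  rw [div_mul_eq_mul_div, div_le_iff₀ h1k]
  calc (n:ℝ) * (M + 1 / k ^ (n-1) * m) ≤ (1 + k) * polyMaxOn (derivative p) 1 := hfinal
    _ = polyMaxOn (derivative p) 1 * (1 + k) := by ring
end

section
/- If p is a complex polynomial of degree n and q(z) = z^n · conj(p(1/conj(z))) is its reciprocal polynomial, then for every z with |z| = 1, |p'(z)| + |q'(z)| ≤ n · max_{|w|=1} |p(w)|. -/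
open Polynomial Metric

private lemma re_half {z u : ℂ} (hz : ‖z‖ = 1) (hu : ‖u‖ < 1) :
    (1/2 : ℝ) ≤ (z / (z - u)).re := by
  have hz0 : z ≠ 0 := by intro h; rw [h] at hz; simp at hz
  have hzu : z - u ≠ 0 := by
    intro h
    have : u = z := by linear_combination -h
    rw [this, hz] at hu; linarith
  have key : z / (z - u) = (1 - u/z)⁻¹ := by
    field_simp
  rw [key]
  set v := u / z with hv
  have hvabs : ‖v‖ < 1 := by
    rw [hv, norm_div, hz, div_one]; exact hu
  have hnormsq : Complex.normSq v < 1 := by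
    have := Complex.sq_norm v
    nlinarith [norm_nonneg v]
  have h1v : (1 - v) ≠ 0 := by
    intro h
    have : v = 1 := by linear_combination -h
    rw [this] at hvabs; simp at hvabs
  rw [Complex.inv_re]
  have hre : (1 - v).re = 1 - v.re := by simp
  have hnsq : Complex.normSq (1 - v) = (1 - v.re)^2 + v.im^2 := by
    rw [Complex.normSq_apply]; simp; ring
  have hpos : 0 < Complex.normSq (1 - v) := by
    rwa [Complex.normSq_pos]
  rw [hre, le_div_iff₀ hpos]
  rw [Complex.normSq_apply] at hnormsq
  nlinarith


private lemma core_aux (z : ℂ) (hz : ‖z‖ = 1) (c : ℂ) (hc : c ≠ 0)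
    (t : Multiset ℂ) (ht : ∀ w ∈ t, ‖w‖ < 1) :
    (C c * (t.map (fun w => X - C w)).prod).eval z ≠ 0 ∧
      (t.card : ℝ) / 2 ≤ (z * (C c * (t.map (fun w => X - C w)).prod).derivative.eval z /
        (C c * (t.map (fun w => X - C w)).prod).eval z).re := by
  induction t using Multiset.induction with
  | empty => simpa using hc
  | cons w s ih =>
    have hw : ‖w‖ < 1 := ht w (Multiset.mem_cons_self w s)
    have hs : ∀ v ∈ s, ‖v‖ < 1 := fun v hv => ht v (Multiset.mem_cons_of_mem hv)
    obtain ⟨hg0, hgre⟩ := ih hs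
    set g := C c * (s.map (fun w => X - C w)).prod with hgdef
    have hzw : z - w ≠ 0 := by
      intro h
      have : w = z := by linear_combination -h
      rw [this, hz] at hw; linarith
    have hfact : C c * ((w ::ₘ s).map (fun w => X - C w)).prod = (X - C w) * g := by
      rw [Multiset.map_cons, Multiset.prod_cons, hgdef]; ring
    rw [hfact]
    have heval : ((X - C w) * g).eval z = (z - w) * g.eval z := by simp
    constructor
    · rw [heval]; exact mul_ne_zero hzw hg0
    · have hd : ((X - C w) * g).derivative = g + (X - C w) * g.derivative := by
        rw [derivative_mul]; simp
      have hq : z * ((X - C w) * g).derivative.eval z / ((X - C w) * g).eval z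
          = z / (z - w) + z * g.derivative.eval z / g.eval z := by
        rw [hd, heval]
        simp only [eval_add, eval_mul, eval_sub, eval_X, eval_C]
        field_simp
      rw [hq, Complex.add_re, Multiset.card_cons]
      push_cast
      have := re_half hz hw
      linarith

private lemma core2 (f : Polynomial ℂ) (hf0 : f ≠ 0)
    (hroots : ∀ w : ℂ, f.IsRoot w → ‖w‖ < 1) (z : ℂ) (hz : ‖z‖ = 1) :
    ‖(f.natDegree : ℂ) * f.eval z - z * f.derivative.eval z‖ ≤
      ‖f.derivative.eval z‖ := by
  have hsplit : Splits f := IsAlgClosed.splits f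
  have hfact := hsplit.eq_prod_roots
  have hcard : f.roots.card = f.natDegree := (splits_iff_card_roots).mp hsplit
  have hmem : ∀ w ∈ f.roots, ‖w‖ < 1 := by
    intro w hw
    exact hroots w (isRoot_of_mem_roots hw)
  have hlc : f.leadingCoeff ≠ 0 := leadingCoeff_ne_zero.mpr hf0
  obtain ⟨hne, hre⟩ := core_aux z hz f.leadingCoeff hlc f.roots hmem
  rw [← hfact] at hne hre
  rw [hcard] at hre
  -- now |n * a - b| ≤ |b| with Re(b/a) ≥ n/2
  set a := f.eval z with ha
  set b := z * f.derivative.eval z with hb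
  set m := f.natDegree with hm
  have habs : ‖f.derivative.eval z‖ = ‖b‖ := by
    rw [hb, norm_mul, hz, one_mul]
  rw [habs]
  have key : (m : ℂ) * a - b = a * ((m : ℂ) - b / a) := by
    field_simp
  rw [key]
  have hb_a : b = a * (b / a) := by field_simp
  nth_rewrite 2 [hb_a]
  rw [norm_mul, norm_mul]
  refine mul_le_mul_of_nonneg_left ?_ (norm_nonneg a)
  -- |m - w| ≤ |w| where Re w ≥ m/2
  set w := b / a with hw
  have h1 : ‖(m : ℂ) - w‖ ^ 2 ≤ ‖w‖ ^ 2 := by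
    rw [Complex.sq_norm, Complex.sq_norm, Complex.normSq_apply, Complex.normSq_apply]
    have hre' : ((m : ℂ) - w).re = (m : ℝ) - w.re := by simp
    have him : ((m : ℂ) - w).im = -w.im := by simp
    rw [hre', him]
    have hmnn : (0:ℝ) ≤ (m:ℝ) := Nat.cast_nonneg m
    nlinarith [hre]
  nlinarith [norm_nonneg ((m:ℂ) - w), norm_nonneg w]
private lemma step (h : Polynomial ℂ) (n : ℕ) (hn : 1 ≤ n) (M : ℝ) (hM : 0 < M)
    (hdeg : h.natDegree ≤ n) (hcoeff : ‖h.coeff n‖ ≤ M)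
    (hext : ∀ z : ℂ, 1 ≤ ‖z‖ → ‖h.eval z‖ ≤ M * ‖z‖ ^ n)
    (z : ℂ) (hz : ‖z‖ = 1) :
    ‖(n : ℂ) * h.eval z - z * h.derivative.eval z‖ ≤
      |n * M - ‖h.derivative.eval z‖| := by
  obtain ⟨m, rfl⟩ : ∃ m, n = m + 1 := ⟨n - 1, (Nat.succ_pred_eq_of_pos hn).symm⟩
  set n := m + 1
  have hz0 : z ≠ 0 := by intro hc; rw [hc] at hz; simp at hz
  set r := ‖h.derivative.eval z‖ with hr
  have hrnn : 0 ≤ r := norm_nonneg _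
  refine le_of_forall_pos_le_add (fun ε hε => ?_)
  -- choose ε' so that ε' * (n*M) ≤ ε
  set ε' : ℝ := ε / (n * M) with hε'
  have hnM : (0:ℝ) < n * M := by positivity
  have hε'pos : 0 < ε' := div_pos hε hnM
  -- unimodular direction of h'(z)
  set u : ℂ := if h.derivative.eval z = 0 then 1 else h.derivative.eval z / ‖h.derivative.eval z‖ with hu
  have hu1 : ‖u‖ = 1 := by
    rw [hu]; split
    · simp
    · rename_i hne
      rw [norm_div, Complex.norm_real, Real.norm_eq_abs, abs_of_nonneg hrnn]
      rw [div_eq_one_iff_eq (by simpa [hr] using (norm_ne_zero_iff.mpr hne))]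
  have hu0 : u ≠ 0 := by intro hc; rw [hc] at hu1; simp at hu1
  have hderiv_u : h.derivative.eval z = u * (r : ℂ) := by
    rw [hu]; split
    · rename_i h0; rw [h0]; simp [hr, h0]
    · rename_i hne
      have hc : ((r : ℝ) : ℂ) ≠ 0 := Complex.ofReal_ne_zero.mpr (by simpa [hr] using (norm_ne_zero_iff.mpr hne))
      rw [hr, div_mul_cancel₀ _ hc]
  set lam : ℂ := (1 + ε') * u / z ^ m with hlam
  have hzm : z ^ m ≠ 0 := pow_ne_zero m hz0
  have hlamabs : ‖lam‖ = 1 + ε' := by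
    rw [hlam, norm_div, norm_mul, hu1, norm_pow, hz, one_pow, div_one, mul_one]
    rw [show ((1:ℂ) + (ε':ℝ)) = (((1+ε' : ℝ)) : ℂ) by push_cast; ring, Complex.norm_real, Real.norm_eq_abs]
    rw [abs_of_pos]; linarith
  -- the auxiliary polynomial f
  set f : Polynomial ℂ := C (lam * M) * X ^ n - h with hf
  have hcoeff_f : f.coeff n = lam * M - h.coeff n := by
    rw [hf, coeff_sub, coeff_C_mul, coeff_X_pow, if_pos rfl, mul_one]
  have habs_lamM : ‖lam * M‖ = (1 + ε') * M := by
    rw [norm_mul, hlamabs, Complex.norm_real, Real.norm_eq_abs, abs_of_pos hM]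
  have hcoeff_ne : f.coeff n ≠ 0 := by
    rw [hcoeff_f]
    intro hc
    have : lam * M = h.coeff n := by linear_combination hc
    have h2 : ‖lam * (M:ℂ)‖ = ‖h.coeff n‖ := by rw [this]
    rw [habs_lamM] at h2
    nlinarith
  have hf0 : f ≠ 0 := fun hc => hcoeff_ne (by rw [hc]; simp)
  have hdegf_le : f.natDegree ≤ n := by
    apply le_trans (natDegree_sub_le _ _)
    apply max_le _ hdeg
    apply le_trans (natDegree_C_mul_le _ _)
    simp
  have hdegf : f.natDegree = n :=
    le_antisymm hdegf_le (le_natDegree_of_ne_zero hcoeff_ne)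
  have hroots : ∀ w : ℂ, f.IsRoot w → ‖w‖ < 1 := by
    intro w hw
    by_contra hcon
    push_neg at hcon
    have hweval : h.eval w = lam * M * w ^ n := by
      have := hw
      rw [IsRoot, hf, eval_sub, eval_mul, eval_C, eval_pow, eval_X, sub_eq_zero] at this
      exact this.symm
    have h1 : ‖h.eval w‖ ≤ M * ‖w‖ ^ n := hext w hcon
    have h2 : ‖h.eval w‖ = (1 + ε') * M * ‖w‖ ^ n := by
      rw [hweval, norm_mul, norm_pow, habs_lamM]
    have hwpow : 0 < ‖w‖ ^ n := by positivity
    nlinarith [mul_pos (mul_pos hε'pos hM) hwpow]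
  have hcore := core2 f hf0 hroots z hz
  rw [hdegf] at hcore
  -- compute f.eval z and f.derivative.eval z
  have hfe : f.eval z = lam * M * z ^ n - h.eval z := by
    rw [hf]; simp
  have hfd : f.derivative = C (lam * M) * (C (n : ℂ) * X ^ m) - h.derivative := by
    rw [hf, derivative_sub, derivative_C_mul, derivative_X_pow]
    norm_num
    exact Or.inl (Or.inl rfl)
  have hfde : f.derivative.eval z = lam * M * ((n:ℂ) * z ^ m) - h.derivative.eval z := by
    rw [hfd]; simp
  have hlamz : lam * z ^ m = (1 + (ε':ℝ)) * u := by
    rw [hlam, div_mul_cancel₀ _ hzm]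
  have hfde2 : f.derivative.eval z = u * ((1 + ε') * n * M - r) := by
    rw [hfde, hderiv_u,
      show lam * (M:ℂ) * ((n:ℂ) * z ^ m) = lam * z ^ m * ((n:ℂ) * (M:ℂ)) by ring, hlamz]
    push_cast
    ring
  have habs_fde : ‖f.derivative.eval z‖ = |(1 + ε') * n * M - r| := by
    rw [hfde2, norm_mul, hu1, one_mul]
    rw [show ((1:ℂ) + (ε':ℝ)) * (n:ℂ) * (M:ℂ) - (r:ℝ) = (((1+ε') * n * M - r : ℝ) : ℂ) by push_cast; ring]
    exact (Complex.norm_real _).trans (Real.norm_eq_abs _)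
  have hlhs : (n:ℂ) * f.eval z - z * f.derivative.eval z
      = -((n:ℂ) * h.eval z - z * h.derivative.eval z) := by
    rw [hfe, hfde, show z ^ n = z ^ m * z from pow_succ z m]
    ring
  rw [hlhs, norm_neg] at hcore
  rw [habs_fde] at hcore
  refine le_trans hcore ?_
  have key2 : |(1 + ε') * ↑n * M - r| ≤ |↑n * M - r| + ε' * (n * M) := by
    rw [show (1 + ε') * ↑n * M - r = (↑n * M - r) + ε' * (n * M) by ring]
    calc |(↑n * M - r) + ε' * (n * M)| ≤ |↑n * M - r| + |ε' * (n * M)| := abs_add_le _ _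
      _ = |↑n * M - r| + ε' * (n * M) := by rw [abs_of_pos (mul_pos hε'pos hnM)]
  refine le_trans key2 ?_
  have : ε' * (n * M) = ε := by
    rw [hε', div_mul_cancel₀]
    exact ne_of_gt hnM
  rw [this]
private lemma circle_infinite : {z : ℂ | ‖z‖ = 1}.Infinite := by
  have hinj : Function.Injective (fun t : ℝ => ((t : ℂ) - Complex.I) / ((t : ℂ) + Complex.I)) := by
    intro s t hst
    simp only at hst
    have hs : (s : ℂ) + Complex.I ≠ 0 := by
      intro hc
      have := congrArg Complex.im hc
      simp at this
    have ht : (t : ℂ) + Complex.I ≠ 0 := by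
      intro hc
      have := congrArg Complex.im hc
      simp at this
    rw [div_eq_div_iff hs ht] at hst
    have : (2 : ℂ) * Complex.I * s = 2 * Complex.I * t := by
      linear_combination hst
    have h2 : (s : ℂ) = t := by
      field_simp at this
      exact_mod_cast this
    exact_mod_cast h2
  apply Set.infinite_of_injective_forall_mem hinj
  intro t
  simp only [Set.mem_setOf_eq, norm_div]
  rw [div_eq_one_iff_eq]
  · rw [Complex.norm_def, Complex.norm_def, Complex.normSq_apply, Complex.normSq_apply]
    simp
  · refine norm_ne_zero_iff.mpr ?_
    intro hc
    have := congrArg Complex.im hc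
    simp at this

private lemma eval_reflect (f : Polynomial ℂ) (N : ℕ) (hf : f.natDegree ≤ N) (z : ℂ)
    (hz : z ≠ 0) : (reflect N f).eval z = z ^ N * f.eval z⁻¹ := by
  haveI : Invertible z⁻¹ := invertibleOfNonzero (inv_ne_zero hz)
  have h := eval₂_reflect_mul_pow (RingHom.id ℂ) z⁻¹ N f hf
  have hinv : (⅟ (z⁻¹) : ℂ) = z := by
    rw [invOf_eq_inv, inv_inv]
  rw [hinv] at h
  have hid : ∀ (g : Polynomial ℂ) (x : ℂ), eval₂ (RingHom.id ℂ) x g = g.eval x :=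
    fun _ _ => rfl
  rw [hid, hid] at h
  rw [← h, mul_comm, mul_assoc, ← mul_pow, inv_mul_cancel₀ hz, one_pow, mul_one]

private lemma conj_eval (f : Polynomial ℂ) (y : ℂ) :
    (f.map (starRingEnd ℂ)).eval ((starRingEnd ℂ) y) = (starRingEnd ℂ) (f.eval y) := by
  rw [eval_map, eval₂_at_apply]

theorem govil_rahman (p q : Polynomial ℂ) (n : ℕ) (hn : 1 ≤ n) (hdeg : p.natDegree = n)
    (hq : ∀ z : ℂ, z ≠ 0 →
      q.eval z = z ^ n * (starRingEnd ℂ) (p.eval ((starRingEnd ℂ) z)⁻¹)) :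
    ∀ z : ℂ, ‖z‖ = 1 →
      ‖(derivative p).eval z‖ + ‖(derivative q).eval z‖ ≤
        n * polyMaxOn p 1 := by
  intro z hz
  obtain ⟨m, hm⟩ : ∃ m, n = m + 1 := ⟨n - 1, (Nat.succ_pred_eq_of_pos hn).symm⟩
  have hp0 : p ≠ 0 := by
    intro hc
    rw [hc, natDegree_zero] at hdeg
    omega
  have hz0 : z ≠ 0 := by intro hc; rw [hc] at hz; simp at hz
  set K := starRingEnd ℂ with hK
  set pb := p.map K with hpbdef
  have hKK : ∀ w : ℂ, K (K w) = w := fun w => Complex.conj_conj w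
  have hKabs : ∀ w : ℂ, ‖K w‖ = ‖w‖ := fun w => Complex.norm_conj w
  have hpb_deg : pb.natDegree = n := by
    rw [hpbdef, natDegree_map_eq_of_injective (RingHom.injective K), hdeg]
  -- q as a holomorphic expression away from 0
  have hq' : ∀ w : ℂ, w ≠ 0 → q.eval w = w ^ n * pb.eval w⁻¹ := by
    intro w hw
    rw [hq w hw]
    congr 1
    have : w⁻¹ = K ((K w)⁻¹) := by rw [map_inv₀, hKK]
    rw [this, hpbdef, conj_eval]
  -- q is the reflected conjugate polynomial
  have hqpoly : q = reflect n pb := by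
    have hsub : ∀ w : ℂ, w ≠ 0 → (q - reflect n pb).eval w = 0 := by
      intro w hw
      rw [eval_sub, hq' w hw, eval_reflect pb n (le_of_eq hpb_deg) w hw, sub_self]
    have hinf : {x : ℂ | (q - reflect n pb).IsRoot x}.Infinite := by
      refine Set.Infinite.mono ?_ (Set.Finite.infinite_compl (Set.finite_singleton (0:ℂ)))
      intro x hx
      exact hsub x hx
    have := eq_zero_of_infinite_isRoot _ hinf
    linear_combination this
  -- the maximum M
  set M := polyMaxOn p 1 with hMdef
  have hub : ∀ w : ℂ, ‖w‖ = 1 → ‖p.eval w‖ ≤ M := by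
    intro w hw
    apply le_csSup
    · exact ((isCompact_sphere (0:ℂ) 1).image (by continuity)).bddAbove
    · exact ⟨w, by simp [mem_sphere_zero_iff_norm, hw], rfl⟩
  have hMpos : 0 < M := by
    obtain ⟨w, hw⟩ := (circle_infinite.diff (finite_setOf_isRoot hp0)).nonempty
    have hw1 : ‖w‖ = 1 := hw.1
    have hw2 : p.eval w ≠ 0 := hw.2
    calc (0:ℝ) < ‖p.eval w‖ := norm_pos_iff.mpr hw2
      _ ≤ M := hub w hw1
  -- maximum modulus principle: interior bounds
  have hball : ∀ (f : Polynomial ℂ), (∀ w : ℂ, ‖w‖ = 1 → ‖f.eval w‖ ≤ M) →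
      ∀ w : ℂ, ‖w‖ ≤ 1 → ‖f.eval w‖ ≤ M := by
    intro f hbd w hw
    have := Complex.norm_le_of_forall_mem_frontier_norm_le (U := ball (0:ℂ) 1)
      isBounded_ball (f.differentiable.diffContOnCl)
      (C := M) (fun x hx => by
        rw [frontier_ball (0:ℂ) one_ne_zero, mem_sphere_zero_iff_norm] at hx
        exact hbd x hx)
      (z := w) (by
        rw [closure_ball (0:ℂ) one_ne_zero, mem_closedBall_zero_iff]
        exact hw)
    exact this
  have hp_ball : ∀ w : ℂ, ‖w‖ ≤ 1 → ‖p.eval w‖ ≤ M :=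
    hball p (fun w hw => hub w hw)
  have hinvconj : ∀ w : ℂ, ‖w‖ = 1 → w⁻¹ = K w := by
    intro w hw
    refine inv_eq_of_mul_eq_one_right ?_
    rw [hK, Complex.mul_conj]
    norm_cast
    rw [Complex.normSq_eq_norm_sq, hw, one_pow]
  have hq_circle : ∀ w : ℂ, ‖w‖ = 1 → ‖q.eval w‖ = ‖p.eval w‖ := by
    intro w hw
    have hw0 : w ≠ 0 := by intro hc; rw [hc] at hw; simp at hw
    rw [hq' w hw0, hinvconj w hw]
    have : pb.eval (K w) = K (p.eval w) := by rw [hpbdef, conj_eval]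
    rw [this, norm_mul, norm_pow, hw, one_pow, one_mul, hKabs]
  have hq_ball : ∀ w : ℂ, ‖w‖ ≤ 1 → ‖q.eval w‖ ≤ M :=
    hball q (fun w hw => by rw [hq_circle w hw]; exact hub w hw)
  -- exterior bounds
  have hext_p : ∀ w : ℂ, 1 ≤ ‖w‖ → ‖p.eval w‖ ≤ M * ‖w‖ ^ n := by
    intro w hw
    have hw0 : w ≠ 0 := by
      intro hc; rw [hc] at hw; simp at hw; linarith
    have hKw0 : K w ≠ 0 := fun hc => hw0 (by rw [← hKK w, hc, map_zero])
    set u := (K w)⁻¹ with hu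
    have hu0 : u ≠ 0 := inv_ne_zero hKw0
    have huinv : u⁻¹ = K w := by rw [hu, inv_inv]
    have huabs : ‖u‖ = (‖w‖)⁻¹ := by
      rw [hu, norm_inv, hKabs]
    have hq_u : q.eval u = u ^ n * K (p.eval w) := by
      rw [hq' u hu0, huinv]
      congr 1
      rw [hpbdef, conj_eval]
    have h1 : ‖q.eval u‖ ≤ M := by
      apply hq_ball
      rw [huabs]
      exact inv_le_one_of_one_le₀ hw
    rw [hq_u, norm_mul, norm_pow, huabs, hKabs] at h1
    have hwabs : 0 < ‖w‖ := norm_pos_iff.mpr hw0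
    have hwpow : 0 < ‖w‖ ^ n := by positivity
    rw [inv_pow] at h1
    calc ‖p.eval w‖
        = (‖w‖ ^ n)⁻¹ * ‖p.eval w‖ * ‖w‖ ^ n := by
          field_simp
      _ ≤ M * ‖w‖ ^ n := by
          apply mul_le_mul_of_nonneg_right h1 (le_of_lt hwpow)
  have hext_q : ∀ w : ℂ, 1 ≤ ‖w‖ → ‖q.eval w‖ ≤ M * ‖w‖ ^ n := by
    intro w hw
    have hw0 : w ≠ 0 := by
      intro hc; rw [hc] at hw; simp at hw; linarith
    rw [hq' w hw0, norm_mul, norm_pow]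
    have : pb.eval w⁻¹ = K (p.eval (K w⁻¹)) := by
      rw [← hKK (w⁻¹), hpbdef, conj_eval, hKK]
    rw [this, hKabs]
    have h1 : ‖p.eval (K w⁻¹)‖ ≤ M := by
      apply hp_ball
      rw [hKabs, norm_inv]
      exact inv_le_one_of_one_le₀ hw
    have hwpow : (0:ℝ) ≤ ‖w‖ ^ n := by positivity
    calc ‖w‖ ^ n * ‖p.eval (K w⁻¹)‖ ≤ ‖w‖ ^ n * M :=
          mul_le_mul_of_nonneg_left h1 hwpow
      _ = M * ‖w‖ ^ n := mul_comm _ _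
  -- coefficient bounds
  have hcoeff_p : ‖p.coeff n‖ ≤ M := by
    have : q.eval 0 = K (p.coeff n) := by
      rw [← coeff_zero_eq_eval_zero, hqpoly, coeff_reflect, revAt_le (Nat.zero_le n),
        Nat.sub_zero, hpbdef, coeff_map]
    have h1 : ‖q.eval 0‖ ≤ M := hq_ball 0 (by simp)
    rw [this, hKabs] at h1
    exact h1
  have hcoeff_q : ‖q.coeff n‖ ≤ M := by
    have : q.coeff n = K (p.coeff 0) := by
      rw [hqpoly, coeff_reflect, revAt_le (le_refl n), Nat.sub_self, hpbdef, coeff_map]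
    rw [this, hKabs, coeff_zero_eq_eval_zero]
    exact hp_ball 0 (by simp)
  have hdeg_q : q.natDegree ≤ n := by
    rw [hqpoly]
    apply natDegree_le_iff_coeff_eq_zero.mpr
    intro i hi
    rw [coeff_reflect, revAt_eq_self_of_lt hi]
    exact coeff_eq_zero_of_natDegree_lt (by omega)
  -- derivative of q at z
  have hzinv : z⁻¹ = K z := hinvconj z hz
  have hpb_z : pb.eval z⁻¹ = K (p.eval z) := by rw [hzinv, hpbdef, conj_eval]
  have hpb'_z : pb.derivative.eval z⁻¹ = K ((derivative p).eval z) := by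
    rw [hzinv, hpbdef, derivative_map, conj_eval]
  have hDq : (derivative q).eval z =
      (n : ℂ) * z ^ (n - 1) * pb.eval z⁻¹ +
        z ^ n * (pb.derivative.eval z⁻¹ * (-(z ^ 2)⁻¹)) := by
    have hEq : (fun w : ℂ => q.eval w) =ᶠ[nhds z] (fun w => w ^ n * pb.eval w⁻¹) := by
      refine Filter.eventuallyEq_of_mem (IsOpen.mem_nhds isOpen_compl_singleton hz0) ?_
      intro w hw
      exact hq' w hw
    have hD : HasDerivAt (fun w : ℂ => w ^ n * pb.eval w⁻¹)
        ((n : ℂ) * z ^ (n - 1) * pb.eval z⁻¹ +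
          z ^ n * (pb.derivative.eval z⁻¹ * (-(z ^ 2)⁻¹))) z := by
      exact (hasDerivAt_pow n z).mul ((pb.hasDerivAt z⁻¹).comp z (hasDerivAt_inv hz0))
    rw [← Polynomial.deriv, Filter.EventuallyEq.deriv_eq hEq]
    exact hD.deriv
  -- key algebraic identities
  set A : ℂ := (n : ℂ) * p.eval z - z * (derivative p).eval z with hA
  set B : ℂ := (n : ℂ) * q.eval z - z * (derivative q).eval z with hB
  have hKA : K A = (n : ℂ) * K (p.eval z) - z⁻¹ * K ((derivative p).eval z) := by
    rw [hA, map_sub, map_mul, map_mul, map_natCast, ← hzinv]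
  have hqd : (derivative q).eval z = z ^ m * K A := by
    rw [hDq, hpb_z, hpb'_z, hKA, hm]
    have h2 : (z ^ 2)⁻¹ = z⁻¹ * z⁻¹ := by rw [sq, mul_inv]
    simp only [Nat.add_sub_cancel]
    rw [h2, pow_succ]
    field_simp
    ring
  have habs_zm : ‖z ^ m‖ = 1 := by rw [norm_pow, hz, one_pow]
  have hs_eq : ‖(derivative q).eval z‖ = ‖A‖ := by
    rw [hqd, norm_mul, habs_zm, one_mul, hKabs]
  have hB_eq : B = z ^ m * K ((derivative p).eval z) := by
    rw [hB, hqd, hq' z hz0, hpb_z, hKA, hm, pow_succ]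
    field_simp
    ring
  have hr_eq : ‖B‖ = ‖(derivative p).eval z‖ := by
    rw [hB_eq, norm_mul, habs_zm, one_mul, hKabs]
  -- apply the two step inequalities
  have hstep_p := step p n hn M hMpos (le_of_eq hdeg) hcoeff_p hext_p z hz
  have hstep_q := step q n hn M hMpos hdeg_q hcoeff_q hext_q z hz
  rw [← hA] at hstep_p
  rw [← hB, hr_eq] at hstep_q
  rw [← hs_eq] at hstep_p
  set r := ‖(derivative p).eval z‖ with hrdef
  set s := ‖(derivative q).eval z‖ with hsdef
  have hrnn : 0 ≤ r := norm_nonneg _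
  have hsnn : 0 ≤ s := norm_nonneg _
  have hnM : (0:ℝ) < n * M := by
    have : (0:ℝ) < n := by exact_mod_cast hn
    exact mul_pos this hMpos
  -- hstep_p : s ≤ |n*M - r|, hstep_q : r ≤ |n*M - s|
  rcases abs_cases ((n:ℝ) * M - r) with ⟨h1, h2⟩ | ⟨h1, h2⟩ <;>
    rcases abs_cases ((n:ℝ) * M - s) with ⟨h3, h4⟩ | ⟨h3, h4⟩ <;>
    linarith
end
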